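/- For any E-certified decision (δ̃, R̃) (i.e., E_P[L(δ̃(Y), θ)/R̃(Y)] ≤ 1 for all (θ, P) ∈ 𝓜) and any ε > 0, there exists a family of e-variables E(·, θ), θ ∈ Θ (each satisfying E_P[E(Y, θ)] ≤ 1 for all P with (θ, P) ∈ 𝓜), and a decision rule δ such that R(Y) := sup_{θ ∈ Θ} L(δ(Y), θ)/E(Y, θ) ≤ inf_{a ∈ 𝒜} sup_{θ ∈ Θ} L(a, θ)/E(Y, θ) + ε, and R(Y) ≤ R̃(Y) for all Y; in particular (δ, R) weakly dominates (δ̃, R̃). -/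

import Mathlib

open MeasureTheory Set
open scoped ENNReal

/-- Proposition (`edominate`): for any E-certified decision `(δ̃, R̃)` (i.e.
`E_P[L(δ̃(Y),θ)/R̃(Y)] ≤ 1` for all `(θ,P) ∈ M`) and any `ε > 0`, there exist a family of
e-variables `E(·, θ)` and a decision rule `δ` such that
`R(Y) = sup_θ L(δ(Y),θ)/E(Y,θ) ≤ inf_a sup_θ L(a,θ)/E(Y,θ) + ε` and `R(Y) ≤ R̃(Y)` for
all `Y`; in particular `(δ, R)` weakly dominates `(δ̃, R̃)`. (Losses are strictly
positive; values, ratios and the convention `x/0 = ∞` for `x > 0` are taken in `ℝ≥0∞`.) -/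
theorem statement8
    {Y : Type*} [MeasurableSpace Y] {A : Type*} [Nonempty A] {Θ : Type*}
    (L : A → Θ → ℝ≥0∞) (hLpos : ∀ a θ, 0 < L a θ) (hLfin : ∀ a θ, L a θ < ⊤)
    (M : Set (Θ × Measure Y))
    (hMprob : ∀ p ∈ M, IsProbabilityMeasure p.2)
    (δt : Y → A) (Rt : Y → ℝ≥0∞)
    (hcert : ∀ p ∈ M, ∫⁻ y, L (δt y) p.1 / Rt y ∂p.2 ≤ 1)
    (ε : ℝ) (hε : 0 < ε) :
    ∃ (Evar : Y → Θ → ℝ≥0∞) (δ : Y → A) (R : Y → ℝ≥0∞),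
      -- each `E(·, θ)` is an e-variable against `θ`
      (∀ θ : Θ, ∀ P : Measure Y, (θ, P) ∈ M → ∫⁻ y, Evar y θ ∂P ≤ 1) ∧
      -- `R` is the worst-case E-posterior loss of `δ` ...
      (∀ y, R y = ⨆ θ : Θ, L (δ y) θ / Evar y θ) ∧
      -- ... which `ε`-approximately minimizes the worst-case E-posterior loss
      (∀ y, R y ≤ (⨅ a : A, ⨆ θ : Θ, L a θ / Evar y θ) + ENNReal.ofReal ε) ∧
      -- and `R(Y) ≤ R̃(Y)` pointwise ...
      (∀ y, R y ≤ Rt y) ∧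
      -- ... hence `(δ, R)` weakly dominates `(δ̃, R̃)`
      (∀ p ∈ M, ∀ r : ℝ≥0∞, p.2 {y | r ≤ R y} ≤ p.2 {y | r ≤ Rt y}) := by

  classical
  set Evar : Y → Θ → ℝ≥0∞ := fun y θ => L (δt y) θ / Rt y with hE
  set f : Y → A → ℝ≥0∞ := fun y a => ⨆ θ, L a θ / Evar y θ with hf
  have hfRt : ∀ y, f y (δt y) ≤ Rt y := by
    intro y
    refine iSup_le fun θ => ?_
    show L (δt y) θ / (L (δt y) θ / Rt y) ≤ Rt y
    rcases eq_or_ne (Rt y) 0 with h0 | h0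
    · rw [h0, ENNReal.div_zero (hLpos _ _).ne', ENNReal.div_top]
    rcases eq_or_ne (Rt y) ⊤ with ht | ht
    · simp [ht]
    · refine ENNReal.div_le_of_le_mul ?_
      rw [ENNReal.mul_div_cancel h0 ht]
  have hδex : ∀ y, ∃ a, f y a ≤ min ((⨅ a, f y a) + ENNReal.ofReal ε) (f y (δt y)) := by
    intro y
    by_cases h : (⨅ a, f y a) + ENNReal.ofReal ε < f y (δt y)
    · have hinf : (⨅ a, f y a) ≠ ⊤ := by
        intro htop
        rw [htop, top_add] at h
        exact (not_top_lt h).elim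
      have hlt : (⨅ a, f y a) < (⨅ a, f y a) + ENNReal.ofReal ε :=
        ENNReal.lt_add_right hinf (ENNReal.ofReal_pos.mpr hε).ne'
      obtain ⟨a, ha⟩ := iInf_lt_iff.mp hlt
      exact ⟨a, le_min ha.le (ha.le.trans h.le)⟩
    · exact ⟨δt y, le_min (not_lt.mp h) le_rfl⟩
  choose δ hδ using hδex
  refine ⟨Evar, δ, fun y => f y (δ y), ?_, fun y => rfl, ?_, ?_, ?_⟩
  · intro θ P hmem
    exact hcert (θ, P) hmem
  · exact fun y => (hδ y).trans (min_le_left _ _)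
  · exact fun y => (hδ y).trans ((min_le_right _ _).trans (hfRt y))
  · intro p hp r
    refine measure_mono fun y hy => ?_
    exact le_trans hy ((hδ y).trans ((min_le_right _ _).trans (hfRt y)))
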